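/- arXiv:2510.26552 — 2 statements merged into one kernel-verified Lean document; each statement's English description precedes it below -/
import Mathlib

section
/- For n = 4 and distinct α = {i,j} ⊆ {1,2,3,4}, the set function r on subsets of {1,2,3,4} defined by r(A) = 3 if |A| = 2 and A ≠ α, and r(A) = min{4, 2|A|} otherwise, satisfies the polymatroidal axioms (normalization, monotonicity, and submodularity). -/
open Finset
noncomputable section

/-- The rank function of the polymatroid `V^α_8` on ground set `{1,2,3,4}` with
`α = {i,j}`: `r(A) = 3` if `|A| = 2` and `A ≠ α`, and `r(A) = min {4, 2|A|}` otherwise. -/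
def rV8 (i j : Fin 4) (A : Finset (Fin 4)) : ℝ :=
  if A.card = 2 ∧ A ≠ {i, j} then 3 else min 4 (2 * (A.card : ℝ))

def rN (i j : Fin 4) (A : Finset (Fin 4)) : ℕ :=
  if A.card = 2 ∧ A ≠ {i, j} then 3 else min 4 (2 * A.card)

lemma rV8_eq_rN (i j : Fin 4) (A : Finset (Fin 4)) : rV8 i j A = (rN i j A : ℝ) := by
  unfold rV8 rN
  split <;> push_cast <;> norm_num

lemma rN_mono (i j : Fin 4) : ∀ A B : Finset (Fin 4), A ⊆ B → rN i j A ≤ rN i j B := by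
  intro A B h
  have hc : A.card ≤ B.card := card_le_card h
  unfold rN
  split <;> split
  · omega
  · rename_i h1 h2
    have := h1.1
    omega
  · rename_i h1 h2
    rcases Nat.lt_or_ge A.card 2 with hA | hA
    · omega
    · have hA2 : A.card = 2 := le_antisymm (hc.trans_eq h2.1) hA
      have hAB : A = B := Finset.eq_of_subset_of_card_le h (by omega)
      exact absurd ⟨hA2, hAB ▸ h2.2⟩ h1
  · omega

lemma rN_submod : ∀ (i j : Fin 4), ∀ A B : Finset (Fin 4),
    rN i j (A ∩ B) + rN i j (A ∪ B) ≤ rN i j A + rN i j B := by decide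

/-- `V^α_8` satisfies the polymatroidal axioms. -/
theorem statement5 (i j : Fin 4) (hij : i ≠ j) :
    rV8 i j ∅ = 0 ∧
    (∀ A B : Finset (Fin 4), A ⊆ B → rV8 i j A ≤ rV8 i j B) ∧
    (∀ A B : Finset (Fin 4),
      rV8 i j (A ∩ B) + rV8 i j (A ∪ B) ≤ rV8 i j A + rV8 i j B) := by
  refine ⟨by simp [rV8], ?_, ?_⟩
  · intro A B h
    rw [rV8_eq_rN, rV8_eq_rN]
    exact_mod_cast rN_mono i j A B h
  · intro A B
    simp only [rV8_eq_rN]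
    exact_mod_cast rN_submod i j A B
end
end

section
/- If (X1,X2,X3) is a random vector with each Xi uniformly distributed on an alphabet of size v, pairwise independent, and H(X1,X2,X3) = 2·log v (equivalently, each variable is a function of the other two), then the support of (X1,X2,X3) is the set of rows of a VOA(U_{2,3}, v) (i.e., a Latin square of order v in orthogonal-array form) and (X1,X2,X3) is uniform on it. -/
open Finset
open scoped BigOperators
noncomputable section

/-- Probability that the `A`-marginal of the random vector with joint pmf `p`
takes the same value as on `x`. -/
def margProb {n : ℕ} {m : Fin n → ℕ} (p : (∀ i, Fin (m i)) → ℝ)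
    (A : Finset (Fin n)) (x : ∀ i, Fin (m i)) : ℝ :=
  ∑ y : ∀ i, Fin (m i), if ∀ i ∈ A, y i = x i then p y else 0

/-- The Shannon entropy `H(X_A)` of the subvector indexed by `A`, for the random
vector with joint pmf `p`. -/
def jointEntropy {n : ℕ} {m : Fin n → ℕ} (p : (∀ i, Fin (m i)) → ℝ)
    (A : Finset (Fin n)) : ℝ :=
  -∑ x : ∀ i, Fin (m i), p x * Real.log (margProb p A x)

/-- `p` is a probability mass function. -/
def IsPMF {α : Type*} [Fintype α] (p : α → ℝ) : Prop :=
  (∀ x, 0 ≤ p x) ∧ ∑ x, p x = 1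

/-- `h` is an entropy function of degree `n`: it arises as `A ↦ H(X_A)` for a
random vector `(X_1, …, X_n)` on finite sets. -/
def IsEntropyFunc (n : ℕ) (h : Finset (Fin n) → ℝ) : Prop :=
  ∃ (m : Fin n → ℕ) (p : (∀ i, Fin (m i)) → ℝ), IsPMF p ∧ ∀ A, jointEntropy p A = h A

/-- Marginal probability of the single coordinate `i` taking value `x`. -/
def marg1 {n : ℕ} {m : Fin n → ℕ} (p : (∀ i, Fin (m i)) → ℝ)
    (i : Fin n) (x : Fin (m i)) : ℝ :=
  ∑ y : ∀ j, Fin (m j), if y i = x then p y else 0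

/-- Marginal probability of the pair of coordinates `(i, j)` taking values `(x, y)`. -/
def marg2 {n : ℕ} {m : Fin n → ℕ} (p : (∀ i, Fin (m i)) → ℝ)
    (i j : Fin n) (x : Fin (m i)) (y : Fin (m j)) : ℝ :=
  ∑ z : ∀ k, Fin (m k), if z i = x ∧ z j = y then p z else 0

open scoped Classical in
/-- If `(X1, X2, X3)` are each uniform on an alphabet of size `v`, pairwise
independent, and `H(X1, X2, X3) = 2 log v`, then `(X1, X2, X3)` is uniform on its
support, which is the set of rows of a `VOA(U_{2,3}, v)` (a Latin square of order `v`
in orthogonal-array form): every point of positive probability has probability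
`1/v²`, and for each pair of distinct coordinates every ordered pair of symbols
occurs at exactly one support point. -/
theorem statement19 (v : ℕ) (hv : 1 ≤ v)
    (p : (∀ _ : Fin 3, Fin v) → ℝ)
    (hpmf : IsPMF (α := ∀ i : Fin 3, Fin ((fun _ => v) i)) p)
    (hunif : ∀ (i : Fin 3) (x : Fin v), marg1 (m := fun _ => v) p i x = (v : ℝ)⁻¹)
    (hind : ∀ i j : Fin 3, i ≠ j → ∀ x y : Fin v,
      marg2 (m := fun _ => v) p i j x y
        = marg1 (m := fun _ => v) p i x * marg1 (m := fun _ => v) p j y)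
    (hent : jointEntropy (m := fun _ => v) p Finset.univ = 2 * Real.log v) :
    (∀ x, 0 < p x → p x = (((v : ℝ) ^ 2))⁻¹) ∧
    (∀ i j : Fin 3, i ≠ j → ∀ a b : Fin v,
      (Finset.univ.filter (fun x : ∀ _ : Fin 3, Fin v => 0 < p x ∧ x i = a ∧ x j = b)).card
        = 1) := by
  classical
  obtain ⟨hp0, hp1⟩ := hpmf
  have hv0 : (0:ℝ) < v := by exact_mod_cast Nat.lt_of_lt_of_le Nat.zero_lt_one hv
  set s : ℝ := ((v : ℝ) ^ 2)⁻¹ with hs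
  have hs0 : 0 < s := by positivity
  -- marg2 at (0,1) equals s
  have hm2 : ∀ (i j : Fin 3), i ≠ j → ∀ a b : Fin v,
      marg2 (m := fun _ => v) p i j a b = s := by
    intro i j hij a b
    rw [hind i j hij, hunif, hunif, hs]
    rw [sq, mul_inv]
  -- p x ≤ s for all x
  have hple : ∀ x, p x ≤ s := by
    intro x
    have h1 : p x ≤ marg2 (m := fun _ => v) p 0 1 (x 0) (x 1) := by
      unfold marg2
      have := Finset.single_le_sum
        (f := fun z : (∀ _ : Fin 3, Fin v) => if z 0 = x 0 ∧ z 1 = x 1 then p z else 0)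
        (fun z _ => by split <;> simp [hp0 z]) (Finset.mem_univ x)
      simpa using this
    rw [hm2 0 1 (by decide) (x 0) (x 1)] at h1
    exact h1
  -- rewrite entropy
  have hH : ∑ x, p x * Real.log (p x) = -(2 * Real.log v) := by
    have he : jointEntropy (m := fun _ => v) p Finset.univ
        = -∑ x, p x * Real.log (p x) := by
      unfold jointEntropy
      congr 1
      apply Finset.sum_congr rfl
      intro x _
      congr 2
      unfold margProb
      have hiff : ∀ y : (∀ _ : Fin 3, Fin v),
          (∀ i ∈ (Finset.univ : Finset (Fin 3)), y i = x i) ↔ y = x := by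
        intro y
        constructor
        · intro h; funext i; exact h i (Finset.mem_univ i)
        · intro h i _; rw [h]
      simp only [hiff]
      simp
    rw [he] at hent
    linarith
  have hlogs : Real.log s = -(2 * Real.log v) := by
    rw [hs, Real.log_inv, Real.log_pow]
    push_cast
    ring
  -- key equality: sum of nonneg terms is zero
  have hnn : ∀ x ∈ (Finset.univ : Finset (∀ _ : Fin 3, Fin v)),
      0 ≤ p x * (Real.log s - Real.log (p x)) := by
    intro x _
    rcases eq_or_lt_of_le (hp0 x) with h | h
    · rw [← h]; simp
    · have := Real.log_le_log h (hple x)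
      have : 0 ≤ Real.log s - Real.log (p x) := by linarith
      exact mul_nonneg (hp0 x) this
  have hkey : ∑ x, p x * (Real.log s - Real.log (p x)) = 0 := by
    have : ∑ x, p x * (Real.log s - Real.log (p x))
        = (∑ x, p x) * Real.log s - ∑ x, p x * Real.log (p x) := by
      rw [Finset.sum_mul, ← Finset.sum_sub_distrib]
      apply Finset.sum_congr rfl
      intro x _; ring
    rw [this, hp1, hH, hlogs]; ring
  have hzero := (Finset.sum_eq_zero_iff_of_nonneg hnn).mp hkey
  have part1 : ∀ x, 0 < p x → p x = s := by
    intro x hx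
    have h := hzero x (Finset.mem_univ x)
    have hne : p x ≠ 0 := ne_of_gt hx
    have hlog : Real.log s - Real.log (p x) = 0 := by
      rcases mul_eq_zero.mp h with h' | h'
      · exact absurd h' hne
      · exact h'
    have : Real.log (p x) = Real.log s := by linarith
    calc p x = Real.exp (Real.log (p x)) := (Real.exp_log hx).symm
      _ = Real.exp (Real.log s) := by rw [this]
      _ = s := Real.exp_log hs0
  refine ⟨part1, ?_⟩
  intro i j hij a b
  set T := Finset.univ.filter (fun x : ∀ _ : Fin 3, Fin v => 0 < p x ∧ x i = a ∧ x j = b)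
    with hT
  have hsumT : ∑ x ∈ T, p x = s := by
    have h1 : marg2 (m := fun _ => v) p i j a b
        = ∑ x ∈ Finset.univ.filter (fun x : ∀ _ : Fin 3, Fin v => x i = a ∧ x j = b), p x := by
      unfold marg2
      rw [Finset.sum_filter]
    have h2 : ∑ x ∈ Finset.univ.filter (fun x : ∀ _ : Fin 3, Fin v => x i = a ∧ x j = b), p x
        = ∑ x ∈ T, p x := by
      rw [hT]
      rw [← Finset.sum_filter_of_ne (p := fun x : ∀ _ : Fin 3, Fin v => 0 < p x)
        (fun x _ hne => lt_of_le_of_ne (hp0 x) (Ne.symm hne))]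
      rw [Finset.filter_filter]
      apply Finset.sum_congr _ (fun _ _ => rfl)
      ext x
      simp only [Finset.mem_filter]
      tauto
    rw [← h2, ← h1, hm2 i j hij a b]
  have h3 : ∑ x ∈ T, p x = T.card • s :=
    Finset.sum_eq_card_nsmul (fun x hx => part1 x (Finset.mem_filter.mp hx).2.1)
  have hcard : (T.card : ℝ) * s = s := by
    rw [← nsmul_eq_mul, ← h3, hsumT]
  have hc1 : (T.card : ℝ) = 1 :=
    mul_right_cancel₀ (ne_of_gt hs0) (by rw [hcard, one_mul])
  exact_mod_cast hc1
end
end
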